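/- Let (e_i) be a basis of a Banach space X and π a permutation of the natural numbers. The sequence of one-dimensional subspaces X_n = span{e_{π(n)}} is always a DDD (total and minimal), and it is a skipped-blocking decomposition if and only if (e_{π(n)}) is itself a (Schauder) basis of X. -/

import Mathlib

open Submodule Set Filter Topology

variable {E : Type*} [NormedAddCommGroup E] [NormedSpace ℝ E]

/-- A sequence of subspaces is a DDD: finite-dimensional, total and minimal. -/
def IsDDD (X : ℕ → Submodule ℝ E) : Prop :=
  (∀ n, FiniteDimensional ℝ (X n)) ∧
  (⨆ n, X n).topologicalClosure = ⊤ ∧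
  ∀ n, X n ⊓ (⨆ m ∈ {m | m ≠ n}, X m).topologicalClosure = ⊥

/-- `(W i)` is a finite-dimensional decomposition of its closed linear span:
every element of the closed span is the limit of partial sums of a unique
sequence of vectors `w i ∈ W i`. -/
def IsFDDof (W : ℕ → Submodule ℝ E) : Prop :=
  ∀ x ∈ (⨆ i, W i).topologicalClosure, ∃! w : ℕ → E,
    (∀ i, w i ∈ W i) ∧
      Filter.Tendsto (fun N => ∑ i ∈ Finset.range N, w i) Filter.atTop (nhds x)

/-- Skipped blocking decomposition: a DDD such that every skipped sequence of
blocks is an FDD of its closed linear span. -/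
def IsSBD (X : ℕ → Submodule ℝ E) : Prop :=
  IsDDD X ∧ ∀ n m : ℕ → ℕ, (∀ i, n i ≤ m i) → (∀ i, m i + 1 < n (i + 1)) →
    IsFDDof (fun i => ⨆ j ∈ Set.Icc (n i) (m i), X j)

/-- Minimal f.d. sequence which is a skipped blocking decomposition of its closed span. -/
def IsSBDofSpan (W : ℕ → Submodule ℝ E) : Prop :=
  (∀ n, FiniteDimensional ℝ (W n)) ∧
  (∀ n, W n ⊓ (⨆ m ∈ {m | m ≠ n}, W m).topologicalClosure = ⊥) ∧
  ∀ n m : ℕ → ℕ, (∀ i, n i ≤ m i) → (∀ i, m i + 1 < n (i + 1)) →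
    IsFDDof (fun i => ⨆ j ∈ Set.Icc (n i) (m i), W j)

/-- Norm of the skipped projection `R_{m,k}` onto `X[0,m)` with kernel the closed
span of the tail `X[k+1,∞)` (the spaces `X_m, …, X_k` are skipped). -/
noncomputable def skippedNorm (X : ℕ → Submodule ℝ E) (m k : ℕ) : ℝ :=
  sInf {C : ℝ | 0 ≤ C ∧ ∀ a ∈ (⨆ i ∈ Set.Iio m, X i),
    ∀ b ∈ (⨆ i ∈ Set.Ici (k + 1), X i).topologicalClosure, ‖a‖ ≤ C * ‖a + b‖}

/-- Annihilator of a subspace in the continuous dual. -/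
noncomputable def ann {F : Type*} [NormedAddCommGroup F] [NormedSpace ℝ F] (S : Submodule ℝ F) :
    Submodule ℝ (F →L[ℝ] ℝ) where
  carrier := {f | ∀ x ∈ S, f x = 0}
  add_mem' := by intro f g hf hg x hx; simp [hf x hx, hg x hx]
  zero_mem' := by intro x hx; simp
  smul_mem' := by intro c f hf x hx; simp [hf x hx]

/-- The predecomposition space `Y = [X_n^*]` of a DDD, where
`X_n^* = [X_m]^⊥_{m ≠ n}`. -/
noncomputable def predecomp (X : ℕ → Submodule ℝ E) : Submodule ℝ (E →L[ℝ] ℝ) :=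
  (⨆ n, ann ((⨆ m ∈ {m | m ≠ n}, X m).topologicalClosure)).topologicalClosure

/-- A sequence of subspaces is boundedly complete: boundedness of the partial sums
of a sequence of vectors from the subspaces implies norm convergence. -/
def IsBddCompl (W : ℕ → Submodule ℝ E) : Prop :=
  ∀ v : ℕ → E, (∀ i, v i ∈ W i) →
    BddAbove (Set.range fun N => ‖∑ i ∈ Finset.range N, v i‖) →
    ∃ s : E, Filter.Tendsto (fun N => ∑ i ∈ Finset.range N, v i) Filter.atTop (nhds s)

/-- A Schauder basis of `E`. -/
def IsSchauderBasis (e : ℕ → E) : Prop :=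
  ∀ x : E, ∃! a : ℕ → ℝ,
    Filter.Tendsto (fun N => ∑ i ∈ Finset.range N, a i • e i) Filter.atTop (nhds x)

/-- For a Schauder basis `(e i)` of `X` and a permutation `π`, the
one-dimensional subspaces `span {e (π n)}` always form a DDD, and they form an
SBD iff `(e (π n))` is itself a Schauder basis. -/
lemma mem_topClosure_iff {s : Submodule ℝ E} {x : E} :
    x ∈ s.topologicalClosure ↔ x ∈ closure (s : Set E) := by
  rw [← SetLike.mem_coe, Submodule.topologicalClosure_coe]

theorem fdd_const [CompleteSpace E] (W : ℕ → Submodule ℝ E) (hWc : ∀ i, IsClosed (W i : Set E))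
    (h : IsFDDof W) :
    ∃ C : ℝ, 0 < C ∧ ∀ (w : ℕ → E), (∀ i, w i ∈ W i) → ∀ N M, N ≤ M →
      ‖∑ i ∈ Finset.range N, w i‖ ≤ C * ‖∑ i ∈ Finset.range M, w i‖ := by
  classical
  have addap : ∀ (S T : BoundedContinuousFunction ℕ E) (x : ℕ), (S + T) x = S x + T x :=
    fun _ _ _ => rfl
  have smulap : ∀ (c : ℝ) (S : BoundedContinuousFunction ℕ E) (x : ℕ), (c • S) x = c • S x :=
    fun _ _ _ => rfl
  have zeroap : ∀ (x : ℕ), (0 : BoundedContinuousFunction ℕ E) x = 0 := fun _ => rfl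
  set G : Submodule ℝ (BoundedContinuousFunction ℕ E) :=
    { carrier := {S | S 0 = 0 ∧ (∀ N, S (N+1) - S N ∈ W N) ∧
        ∃ x, Tendsto (fun N => S N) atTop (𝓝 x)}
      add_mem' := by
        rintro S T ⟨h1, h2, x, h3⟩ ⟨h1', h2', y, h3'⟩
        refine ⟨by rw [addap, h1, h1', add_zero], fun N => ?_, x + y, ?_⟩
        · have e : (S + T) (N+1) - (S + T) N = (S (N+1) - S N) + (T (N+1) - T N) := by
            rw [addap, addap]; abel
          rw [e]; exact (W N).add_mem (h2 N) (h2' N)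
        · simpa only [addap] using h3.add h3'
      zero_mem' := ⟨rfl, fun N => by rw [zeroap, zeroap, sub_zero]; exact zero_mem _,
        0, by simpa only [zeroap] using (tendsto_const_nhds : Tendsto (fun _ : ℕ => (0:E)) atTop _)⟩
      smul_mem' := by
        rintro c S ⟨h1, h2, x, h3⟩
        refine ⟨by rw [smulap, h1, smul_zero], fun N => ?_, c • x, ?_⟩
        · have e : (c • S) (N+1) - (c • S) N = c • (S (N+1) - S N) := by
            rw [smulap, smulap, smul_sub]
          rw [e]; exact (W N).smul_mem c (h2 N)
        · simpa only [smulap] using h3.const_smul c } with hG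
  have heval : ∀ (f : ℕ → BoundedContinuousFunction ℕ E) (S : BoundedContinuousFunction ℕ E),
      Tendsto f atTop (𝓝 S) → ∀ x : ℕ, Tendsto (fun n => f n x) atTop (𝓝 (S x)) :=
    fun f S hf x => (continuous_eval_const x).continuousAt.tendsto.comp hf
  have hGc : IsClosed (G : Set (BoundedContinuousFunction ℕ E)) := by
    apply IsSeqClosed.isClosed
    rintro f S hf hconv
    refine ⟨?_, fun N => ?_, ?_⟩
    · have h0 : Tendsto (fun n => f n 0) atTop (𝓝 (0 : E)) := by
        simpa using tendsto_congr (fun n => (hf n).1) |>.mpr tendsto_const_nhds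
      exact tendsto_nhds_unique (heval f S hconv 0) h0
    · have ht : Tendsto (fun n => f n (N+1) - f n N) atTop (𝓝 (S (N+1) - S N)) :=
        (heval f S hconv (N+1)).sub (heval f S hconv N)
      exact (hWc N).mem_of_tendsto ht (Eventually.of_forall fun n => (hf n).2.1 N)
    · have hcs : CauchySeq (fun N => S N) := by
        rw [Metric.cauchySeq_iff]
        intro ε hε
        obtain ⟨j, hj⟩ : ∃ j, dist (f j) S < ε/3 := by
          obtain ⟨j, hj⟩ := (Metric.tendsto_atTop.mp hconv) (ε/3) (by linarith)
          exact ⟨j, hj j le_rfl⟩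
        obtain ⟨x, hx⟩ := (hf j).2.2
        obtain ⟨I, hI⟩ := (Metric.cauchySeq_iff.mp hx.cauchySeq) (ε/3) (by linarith)
        refine ⟨I, fun a ha b hb => ?_⟩
        calc dist (S a) (S b) ≤ dist (S a) (f j a) + dist (f j a) (f j b) + dist (f j b) (S b) :=
              dist_triangle4 _ _ _ _
          _ < ε/3 + ε/3 + ε/3 := by
              gcongr
              · calc dist (S a) (f j a) = dist (f j a) (S a) := dist_comm _ _
                  _ ≤ dist (f j) S := BoundedContinuousFunction.dist_coe_le_dist a
                  _ < ε/3 := hj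
              · exact hI a ha b hb
              · calc dist (f j b) (S b) ≤ dist (f j) S :=
                      BoundedContinuousFunction.dist_coe_le_dist b
                  _ < ε/3 := hj
          _ = ε := by ring
      exact cauchySeq_tendsto_of_complete hcs
  haveI hGcomp : CompleteSpace G := hGc.completeSpace_coe
  have hmemsup : ∀ S : G, ∀ N, (S : BoundedContinuousFunction ℕ E) N ∈ (⨆ i, W i) := by
    rintro ⟨S, h1, h2, _⟩ N
    induction N with
    | zero => rw [h1]; exact zero_mem _
    | succ N ih =>
      have e : S (N+1) = S N + (S (N+1) - S N) := by abel
      rw [e]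
      exact add_mem ih (le_iSup W N (h2 N))
  -- limit as an element of the closure Y
  have hlim : ∀ S : G, ∃ x : (⨆ i, W i).topologicalClosure,
      Tendsto (fun N => (S : BoundedContinuousFunction ℕ E) N) atTop (𝓝 (x : E)) := by
    rintro S
    obtain ⟨x, hx⟩ := S.2.2.2
    refine ⟨⟨x, mem_topClosure_iff.mpr ?_⟩, hx⟩
    exact mem_closure_of_tendsto hx (Eventually.of_forall fun N => hmemsup S N)
  choose Tl hTl using hlim
  have hTadd : ∀ S T : G, Tl (S + T) = Tl S + Tl T := by
    intro S T
    apply Subtype.ext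
    refine tendsto_nhds_unique (hTl (S + T)) ?_
    have : ∀ N, ((S + T : G) : BoundedContinuousFunction ℕ E) N
        = (S : BoundedContinuousFunction ℕ E) N + (T : BoundedContinuousFunction ℕ E) N :=
      fun _ => rfl
    simpa only [this, Submodule.coe_add, BoundedContinuousFunction.add_apply] using (hTl S).add (hTl T)
  have hTsmul : ∀ (c : ℝ) (S : G), Tl (c • S) = c • Tl S := by
    intro c S
    apply Subtype.ext
    refine tendsto_nhds_unique (hTl (c • S)) ?_
    have : ∀ N, ((c • S : G) : BoundedContinuousFunction ℕ E) N
        = c • (S : BoundedContinuousFunction ℕ E) N := fun _ => rfl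
    simpa only [this, Submodule.coe_smul, BoundedContinuousFunction.smul_apply] using (hTl S).const_smul c
  have hTbound : ∀ S : G, ‖Tl S‖ ≤ 1 * ‖S‖ := by
    intro S
    rw [one_mul]
    have : ∀ N, ‖(S : BoundedContinuousFunction ℕ E) N‖ ≤ ‖S‖ :=
      fun N => (BoundedContinuousFunction.norm_coe_le_norm _ N)
    exact le_of_tendsto' (hTl S).norm fun N => this N |>.trans le_rfl
  set Tlin : G →ₗ[ℝ] (⨆ i, W i).topologicalClosure :=
    { toFun := Tl, map_add' := hTadd, map_smul' := hTsmul } with hTlin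
  set T : G →L[ℝ] (⨆ i, W i).topologicalClosure := Tlin.mkContinuous 1 hTbound with hT
  have hTapp : ∀ S : G, T S = Tl S := fun _ => rfl
  -- injectivity
  have hker : T.ker = ⊥ := by
    rw [LinearMap.ker_eq_bot']
    intro S hS
    set w : ℕ → E := fun i => (S : BoundedContinuousFunction ℕ E) (i+1)
      - (S : BoundedContinuousFunction ℕ E) i with hw
    have hsum : ∀ N, ∑ i ∈ Finset.range N, w i = (S : BoundedContinuousFunction ℕ E) N := by
      intro N
      rw [Finset.sum_range_sub (fun i => (S : BoundedContinuousFunction ℕ E) i), S.2.1, sub_zero]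
    have hzero : Tendsto (fun N => ∑ i ∈ Finset.range N, w i) atTop (𝓝 (0 : E)) := by
      have := hTl S
      rw [ContinuousLinearMap.coe_coe, hTapp] at hS
      rw [hS] at this
      simpa only [hsum, Submodule.coe_zero] using this
    have h0mem : (0 : E) ∈ (⨆ i, W i).topologicalClosure := zero_mem _
    have huniq := h 0 h0mem
    have h1 : w = fun _ => (0 : E) := by
      refine huniq.unique ⟨fun i => S.2.2.1 i, hzero⟩ ⟨fun i => zero_mem _, by
        simpa using (tendsto_const_nhds : Tendsto (fun _ : ℕ => (0:E)) atTop _)⟩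
    apply Subtype.ext
    apply BoundedContinuousFunction.ext
    intro N
    have := hsum N
    rw [h1] at this
    simpa using this.symm
  -- surjectivity
  have hrange : T.range = ⊤ := by
    rw [LinearMap.range_eq_top]
    rintro ⟨y, hy⟩
    obtain ⟨w, ⟨hwmem, hwt⟩, -⟩ := h y hy
    obtain ⟨Cb, hCb⟩ := isBounded_iff_forall_norm_le.mp (Metric.isBounded_range_of_tendsto _ hwt)
    set S : BoundedContinuousFunction ℕ E :=
      BoundedContinuousFunction.ofNormedAddCommGroupDiscrete
        (fun N => ∑ i ∈ Finset.range N, w i) Cb (fun N => hCb _ (Set.mem_range_self N)) with hS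
    have hSapp : ∀ N, S N = ∑ i ∈ Finset.range N, w i := fun _ => rfl
    have hSG : S ∈ G := by
      refine ⟨by simp [hSapp], fun N => ?_, y, by simpa only [hSapp] using hwt⟩
      rw [hSapp, hSapp, Finset.sum_range_succ, add_sub_cancel_left]
      exact hwmem N
    refine ⟨⟨S, hSG⟩, ?_⟩
    rw [ContinuousLinearMap.coe_coe, hTapp]
    apply Subtype.ext
    exact tendsto_nhds_unique (hTl ⟨S, hSG⟩) (by simpa only [hSapp] using hwt)
  haveI : CompleteSpace (⨆ i, W i).topologicalClosure := Submodule.topologicalClosure.completeSpace _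
  set eqv := ContinuousLinearEquiv.ofBijective T hker hrange with heqv
  set C : ℝ := ‖(eqv.symm : (⨆ i, W i).topologicalClosure →L[ℝ] G)‖ + 1 with hC
  have hCpos : 0 < C := by positivity
  have hnorm : ∀ S : G, ‖S‖ ≤ C * ‖Tl S‖ := by
    intro S
    have h1 : S = eqv.symm (T S) := (eqv.symm_apply_apply S).symm
    calc ‖S‖ = ‖eqv.symm (T S)‖ := by rw [← h1]
      _ ≤ ‖(eqv.symm : (⨆ i, W i).topologicalClosure →L[ℝ] G)‖ * ‖T S‖ :=
          (eqv.symm : (⨆ i, W i).topologicalClosure →L[ℝ] G).le_opNorm _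
      _ ≤ C * ‖T S‖ := by
          apply mul_le_mul_of_nonneg_right _ (norm_nonneg _)
          simp [hC]
      _ = C * ‖Tl S‖ := by rw [hTapp]
  refine ⟨C, hCpos, ?_⟩
  intro w hw N M hNM
  -- truncated partial sum sequence
  set f : ℕ → E := fun N' => ∑ i ∈ Finset.range (min N' M), w i with hf
  have hfb : ∀ N', ‖f N'‖ ≤ ∑ i ∈ Finset.range M, ‖w i‖ := by
    intro N'
    calc ‖f N'‖ ≤ ∑ i ∈ Finset.range (min N' M), ‖w i‖ := norm_sum_le _ _
      _ ≤ ∑ i ∈ Finset.range M, ‖w i‖ := by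
          apply Finset.sum_le_sum_of_subset_of_nonneg
          · exact Finset.range_subset_range.mpr (min_le_right _ _)
          · intros; exact norm_nonneg _
  set S : BoundedContinuousFunction ℕ E :=
    BoundedContinuousFunction.ofNormedAddCommGroupDiscrete f _ hfb with hS
  have hSapp : ∀ N', S N' = f N' := fun _ => rfl
  have hfconst : ∀ N' ≥ M, f N' = ∑ i ∈ Finset.range M, w i := by
    intro N' hN'
    simp only [hf, min_eq_right hN']
  have hSG : S ∈ G := by
    refine ⟨by simp [hSapp, hf], fun N' => ?_, ∑ i ∈ Finset.range M, w i, ?_⟩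
    · rw [hSapp, hSapp]
      rcases lt_or_ge N' M with hlt | hge
      · have e1 : min (N'+1) M = N' + 1 := min_eq_left hlt
        have e2 : min N' M = N' := min_eq_left hlt.le
        rw [hf]
        simp only [e1, e2, Finset.sum_range_succ, add_sub_cancel_left]
        exact hw N'
      · rw [hf]
        simp only [min_eq_right (le_trans hge (Nat.le_succ _)), min_eq_right hge, sub_self]
        exact zero_mem _
    · simp only [hSapp]
      exact tendsto_atTop_of_eventually_const hfconst
  have hTlS : (Tl ⟨S, hSG⟩ : E) = ∑ i ∈ Finset.range M, w i := by
    refine tendsto_nhds_unique (hTl ⟨S, hSG⟩) ?_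
    simp only [hSapp]
    exact tendsto_atTop_of_eventually_const hfconst
  have key := hnorm ⟨S, hSG⟩
  have h1 : ‖∑ i ∈ Finset.range N, w i‖ ≤ ‖S‖ := by
    have : S N = ∑ i ∈ Finset.range N, w i := by
      rw [hSapp, hf]; simp only [min_eq_left hNM]
    rw [← this]
    exact BoundedContinuousFunction.norm_coe_le_norm S N
  calc ‖∑ i ∈ Finset.range N, w i‖ ≤ ‖S‖ := h1
    _ ≤ C * ‖Tl ⟨S, hSG⟩‖ := key
    _ = C * ‖∑ i ∈ Finset.range M, w i‖ := by
        congr 1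
        change ‖(Tl ⟨S, hSG⟩ : E)‖ = _
        rw [hTlS]


theorem basis_pack [CompleteSpace E] {e : ℕ → E} (hb : IsSchauderBasis e) :
    ∃ (f : ℕ → E →L[ℝ] ℝ) (C : ℝ), 0 < C ∧
      (∀ k l, f k (e l) = if k = l then 1 else 0) ∧
      (∀ x, Tendsto (fun N => ∑ i ∈ Finset.range N, f i x • e i) atTop (𝓝 x)) ∧
      (∀ k (x : E), ‖f k x • e k‖ ≤ C * ‖x‖) := by
  classical
  set a : E → ℕ → ℝ := fun x => (hb x).exists.choose with haa
  have ha : ∀ x, Tendsto (fun N => ∑ i ∈ Finset.range N, a x i • e i) atTop (𝓝 x) :=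
    fun x => (hb x).exists.choose_spec
  have hauniq : ∀ (x : E) (b : ℕ → ℝ),
      Tendsto (fun N => ∑ i ∈ Finset.range N, b i • e i) atTop (𝓝 x) → b = a x :=
    fun x b hbx => (hb x).unique hbx (ha x)
  -- delta expansions
  have hdelta : ∀ l : ℕ, a (e l) = fun i => if i = l then (1:ℝ) else 0 := by
    intro l
    refine (hauniq (e l) _ ?_).symm
    have hcomp : ∀ N, ∑ i ∈ Finset.range N, (if i = l then (1:ℝ) else 0) • e i
        = if l ∈ Finset.range N then e l else 0 := by
      intro N
      rw [← Finset.sum_ite_eq' (Finset.range N) l (fun i => e i)]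
      apply Finset.sum_congr rfl
      intro i _
      by_cases hi : i = l <;> simp [hi]
    apply tendsto_atTop_of_eventually_const (i₀ := l + 1)
    intro N hN
    rw [hcomp, if_pos (Finset.mem_range.mpr hN)]
  have henz : ∀ k, e k ≠ 0 := by
    intro k hk
    have h1 := hdelta k
    have h2 : a (e k) = fun _ => (0:ℝ) := by
      refine (hauniq (e k) _ ?_).symm
      simp only [zero_smul, Finset.sum_const_zero]
      rw [hk]
      exact tendsto_const_nhds
    rw [h2] at h1
    have := congrFun h1 k
    simp at this
  -- spans form an FDD
  have hfdd : ∀ x ∈ (⨆ i, span ℝ {e i}).topologicalClosure, ∃! w : ℕ → E,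
      (∀ i, w i ∈ span ℝ {e i}) ∧
        Tendsto (fun N => ∑ i ∈ Finset.range N, w i) atTop (𝓝 x) := by
    intro x _
    refine ⟨fun i => a x i • e i, ⟨fun i => smul_mem _ _ (mem_span_singleton_self _), ha x⟩, ?_⟩
    rintro y ⟨hymem, hyt⟩
    have hbex : ∀ i, ∃ c : ℝ, c • e i = y i := fun i => mem_span_singleton.mp (hymem i)
    choose b hbspec using hbex
    have hyb : ∀ N, ∑ i ∈ Finset.range N, y i = ∑ i ∈ Finset.range N, b i • e i := by
      intro N; exact Finset.sum_congr rfl fun i _ => (hbspec i).symm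
    have : b = a x := hauniq x b (by simpa only [← hyb] using hyt)
    funext i
    rw [← hbspec i, this]
  obtain ⟨C0, hC0, hkey⟩ := fdd_const (fun i => span ℝ {e i})
    (fun i => closed_of_finiteDimensional _) hfdd
  -- partial sum bound
  have hSN : ∀ (x : E) (N : ℕ), ‖∑ i ∈ Finset.range N, a x i • e i‖ ≤ C0 * ‖x‖ := by
    intro x N
    have hev : ∀ᶠ M in atTop, ‖∑ i ∈ Finset.range N, a x i • e i‖
        ≤ C0 * ‖∑ i ∈ Finset.range M, a x i • e i‖ := by
      filter_upwards [eventually_ge_atTop N] with M hM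
      exact hkey (fun i => a x i • e i)
        (fun i => smul_mem _ _ (mem_span_singleton_self _)) N M hM
    exact ge_of_tendsto ((ha x).norm.const_mul C0) hev
  have hcoordb : ∀ (k : ℕ) (x : E), ‖a x k • e k‖ ≤ (2 * C0) * ‖x‖ := by
    intro k x
    have h1 : a x k • e k = (∑ i ∈ Finset.range (k+1), a x i • e i)
        - ∑ i ∈ Finset.range k, a x i • e i := by
      rw [Finset.sum_range_succ]; abel
    rw [h1]
    calc ‖_ - _‖ ≤ ‖∑ i ∈ Finset.range (k+1), a x i • e i‖
        + ‖∑ i ∈ Finset.range k, a x i • e i‖ := norm_sub_le _ _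
      _ ≤ C0 * ‖x‖ + C0 * ‖x‖ := add_le_add (hSN x (k+1)) (hSN x k)
      _ = (2 * C0) * ‖x‖ := by ring
  -- linearity
  have hadd : ∀ x y : E, a (x + y) = fun i => a x i + a y i := by
    intro x y
    refine (hauniq (x + y) _ ?_).symm
    simp only [add_smul, Finset.sum_add_distrib]
    exact (ha x).add (ha y)
  have hsmul : ∀ (c : ℝ) (x : E), a (c • x) = fun i => c * a x i := by
    intro c x
    refine (hauniq (c • x) _ ?_).symm
    simp only [mul_smul, ← Finset.smul_sum]
    exact (ha x).const_smul c
  have habs : ∀ (k : ℕ) (x : E), |a x k| ≤ (2 * C0 / ‖e k‖) * ‖x‖ := by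
    intro k x
    have hek : 0 < ‖e k‖ := norm_pos_iff.mpr (henz k)
    have := hcoordb k x
    rw [norm_smul, Real.norm_eq_abs] at this
    rw [div_mul_eq_mul_div, le_div_iff₀ hek]
    linarith [this]
  set f : ℕ → E →L[ℝ] ℝ := fun k =>
    LinearMap.mkContinuous
      { toFun := fun x => a x k
        map_add' := fun x y => by have := congrFun (hadd x y) k; simpa using this
        map_smul' := fun c x => by have := congrFun (hsmul c x) k; simpa using this }
      (2 * C0 / ‖e k‖) (fun x => by rw [Real.norm_eq_abs]; exact habs k x) with hf
  have hfapp : ∀ k x, f k x = a x k := fun _ _ => rfl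
  refine ⟨f, 2 * C0, by linarith, ?_, ?_, ?_⟩
  · intro k l
    rw [hfapp, hdelta l]
  · intro x
    simp only [hfapp]
    exact ha x
  · intro k x
    rw [hfapp]
    exact hcoordb k x


/-- If `f l` kills every `e j`, `j ∈ s`, then it kills the closure of the span. -/
lemma ker_span_closure {e : ℕ → E} {f : E →L[ℝ] ℝ} {s : Set ℕ}
    (h : ∀ j ∈ s, f (e j) = 0) :
    (span ℝ (e '' s)).topologicalClosure ≤ LinearMap.ker (f : E →ₗ[ℝ] ℝ) := by
  apply Submodule.topologicalClosure_minimal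
  · rw [Submodule.span_le]
    rintro - ⟨j, hj, rfl⟩
    exact LinearMap.mem_ker.mpr (h j hj)
  · exact ContinuousLinearMap.isClosed_ker f

lemma span_repr {e : ℕ → E} {f : ℕ → E →L[ℝ] ℝ}
    (hdual : ∀ k l, f k (e l) = if k = l then 1 else 0)
    (T : Finset ℕ) {u : E} (hu : u ∈ span ℝ (e '' ↑T)) :
    u = ∑ j ∈ T, f j u • e j := by
  classical
  induction hu using Submodule.span_induction with
  | mem x hx =>
    obtain ⟨j, hj, rfl⟩ := hx
    calc e j = ∑ j' ∈ T, (if j' = j then e j' else 0) := by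
          rw [Finset.sum_ite_eq' T j (fun j' => e j')]
          simp only [Finset.mem_coe] at hj
          rw [if_pos hj]
      _ = ∑ j' ∈ T, f j' (e j) • e j' := by
          apply Finset.sum_congr rfl; intro i _
          rw [hdual]; by_cases hi : i = j <;> simp [hi]
  | zero => simp
  | add x y hx hy ihx ihy =>
    simp only [map_add, add_smul, Finset.sum_add_distrib]
    rw [← ihx, ← ihy]
  | smul c x hx ih =>
    simp only [map_smul, smul_eq_mul, mul_smul, ← Finset.smul_sum]
    rw [← ih]


theorem part1 [CompleteSpace E] (e : ℕ → E) (hbasis : IsSchauderBasis e)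
    (π : Equiv.Perm ℕ) : IsDDD (fun n => Submodule.span ℝ {e (π n)}) := by
  classical
  obtain ⟨f, C, hC, hdual, hexp, hbd⟩ := basis_pack hbasis
  refine ⟨fun n => inferInstance, ?_, ?_⟩
  · -- totality
    rw [eq_top_iff]
    intro x _
    rw [mem_topClosure_iff]
    refine mem_closure_of_tendsto (hexp x) (Eventually.of_forall fun N => ?_)
    rw [SetLike.mem_coe]
    apply sum_mem
    intro i _
    have hi : e i = e (π (π.symm i)) := by rw [Equiv.apply_symm_apply]
    apply Submodule.mem_iSup_of_mem (π.symm i)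
    rw [← hi]
    exact smul_mem _ _ (mem_span_singleton_self _)
  · intro n
    rw [eq_bot_iff]
    rintro x ⟨hx1, hx2⟩
    obtain ⟨c, hc⟩ := mem_span_singleton.mp hx1
    have hker : (⨆ m ∈ {m | m ≠ n}, span ℝ {e (π m)}).topologicalClosure
        ≤ LinearMap.ker (f (π n) : E →ₗ[ℝ] ℝ) := by
      apply Submodule.topologicalClosure_minimal
      · apply iSup₂_le
        intro m hm
        rw [Submodule.span_le, Set.singleton_subset_iff, SetLike.mem_coe, LinearMap.mem_ker,
          ContinuousLinearMap.coe_coe, hdual, if_neg]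
        exact fun hcon => hm (π.injective hcon.symm)
      · exact ContinuousLinearMap.isClosed_ker _
    have h0 : f (π n) x = 0 := LinearMap.mem_ker.mp (hker hx2)
    rw [← hc, map_smul, smul_eq_mul, hdual, if_pos rfl, mul_one] at h0
    rw [Submodule.mem_bot, ← hc, h0, zero_smul]


theorem part_bwd [CompleteSpace E] (ε : ℕ → E) (hb : IsSchauderBasis ε)
    (n m : ℕ → ℕ) (hnm : ∀ i, n i ≤ m i) (hskip : ∀ i, m i + 1 < n (i + 1)) :
    IsFDDof (fun i => ⨆ j ∈ Set.Icc (n i) (m i), span ℝ {ε j}) := by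
  classical
  obtain ⟨g, C, hC, hdual, hexp, hbd⟩ := basis_pack hb
  set W : ℕ → Submodule ℝ E := fun i => ⨆ j ∈ Set.Icc (n i) (m i), span ℝ {ε j} with hW
  have hnmono : StrictMono n := strictMono_nat_of_lt_succ fun i =>
    lt_of_le_of_lt (le_trans (hnm i) (Nat.le_succ _)) (hskip i)
  have hmmono : StrictMono m := strictMono_nat_of_lt_succ fun i => by
    have h1 := hskip i; have h2 := hnm (i+1); omega
  have hsep : ∀ i i', i < i' → m i < n i' := fun i i' h =>
    lt_of_lt_of_le (Nat.lt_of_succ_lt (hskip i)) (hnmono.monotone (Nat.succ_le_of_lt h))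
  have hdisj : ∀ i i' j, j ∈ Set.Icc (n i) (m i) → j ∈ Set.Icc (n i') (m i') → i = i' := by
    intro i i' j hj hj'
    rw [Set.mem_Icc] at hj hj'
    by_contra hne
    rcases Nat.lt_or_ge i i' with hlt | hge
    · have := hsep i i' hlt; omega
    · have hlt : i' < i := by omega
      have := hsep i' i hlt; omega
  have hWle : ∀ i, W i ≤ span ℝ (ε '' ↑(Finset.Icc (n i) (m i))) := by
    intro i
    apply iSup₂_le
    intro j hj
    apply span_mono
    rw [Set.singleton_subset_iff]
    exact ⟨j, by rwa [Finset.coe_Icc], rfl⟩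
  have hWker : ∀ (l i : ℕ), l ∉ Set.Icc (n i) (m i) → W i ≤ LinearMap.ker (g l : E →ₗ[ℝ] ℝ) := by
    intro l i hl
    apply iSup₂_le
    intro j hj
    rw [Submodule.span_le, Set.singleton_subset_iff, SetLike.mem_coe, LinearMap.mem_ker,
      ContinuousLinearMap.coe_coe, hdual, if_neg]
    rintro rfl; exact hl hj
  have hWspan : (⨆ i, W i) ≤ span ℝ (ε '' {j | ∃ i, j ∈ Set.Icc (n i) (m i)}) := by
    apply iSup_le
    intro i
    refine le_trans (hWle i) (span_mono (Set.image_mono ?_))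
    rw [Finset.coe_Icc]
    exact fun j hj => ⟨i, hj⟩
  have hsupker : ∀ l : ℕ, (∀ i, l ∉ Set.Icc (n i) (m i)) →
      (⨆ i, W i).topologicalClosure ≤ LinearMap.ker (g l : E →ₗ[ℝ] ℝ) := by
    intro l hl
    refine le_trans (Submodule.topologicalClosure_mono hWspan) (ker_span_closure ?_)
    rintro j ⟨i, hj⟩
    rw [hdual, if_neg]
    rintro rfl; exact hl i hj
  intro x hx
  set w : ℕ → E := fun i => ∑ j ∈ Finset.Icc (n i) (m i), g j x • ε j with hw
  have hwmem : ∀ i, w i ∈ W i := by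
    intro i
    apply sum_mem
    intro j hj
    rw [Finset.mem_Icc] at hj
    exact le_iSup₂ (f := fun j _ => span ℝ {ε j}) j (Set.mem_Icc.mpr hj)
      (smul_mem _ _ (mem_span_singleton_self _))
  have hzero : ∀ l, (∀ i, l ∉ Set.Icc (n i) (m i)) → g l x = 0 :=
    fun l hl => LinearMap.mem_ker.mp (hsupker l hl hx)
  set BN : ℕ → ℕ := fun N => if N = 0 then 0 else m (N-1) + 1 with hBN
  have hBle : ∀ N, BN N ≤ n N := by
    intro N
    match N with
    | 0 => simp [hBN]
    | (N'+1) =>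
      have h1 := hskip N'
      simp only [hBN, if_neg (Nat.succ_ne_zero N'), Nat.add_sub_cancel]
      omega
  have hcut : ∀ N, ∑ i ∈ Finset.range N, w i = ∑ j ∈ Finset.range (BN N), g j x • ε j := by
    intro N
    induction N with
    | zero => simp [hBN]
    | succ N ih =>
      rw [Finset.sum_range_succ, ih]
      have hB1 : BN (N+1) = m N + 1 := by simp [hBN]
      have step : w N = ∑ j ∈ Finset.Ico (BN N) (m N + 1), g j x • ε j := by
        simp only [hw]
        have hIccIco : Finset.Icc (n N) (m N) = Finset.Ico (n N) (m N + 1) := by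
          rw [Finset.Ico_add_one_right_eq_Icc]
        rw [hIccIco]
        apply Finset.sum_subset
        · intro j hj
          rw [Finset.mem_Ico] at *
          exact ⟨le_trans (hBle N) hj.1, hj.2⟩
        · intro j hj1 hj2
          rw [Finset.mem_Ico] at hj1 hj2
          push_neg at hj2
          have hjn : j < n N := by
            by_contra hc
            push_neg at hc
            exact absurd (hj2 hc) (by omega)
          have : g j x = 0 := by
            apply hzero
            intro i hji
            rw [Set.mem_Icc] at hji
            rcases Nat.lt_or_ge i N with hi | hi
            · have hNpos : 0 < N := Nat.pos_of_ne_zero (by omega)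
              have hBeq : BN N = m (N-1) + 1 := by
                simp only [hBN, if_neg (Nat.pos_iff_ne_zero.mp hNpos)]
              have hmle : m i ≤ m (N-1) := hmmono.monotone (by omega)
              omega
            · have : n N ≤ n i := hnmono.monotone hi
              omega
          rw [this, zero_smul]
      rw [step, hB1]
      simp only [Finset.range_eq_Ico]
      exact Finset.sum_Ico_consecutive _ (Nat.zero_le _) (le_trans (hBle N) (le_trans (hnm N) (Nat.le_succ _)))
  have hidle : ∀ N, N ≤ BN N := by
    intro N
    match N with
    | 0 => simp [hBN]
    | (N'+1) =>
      simp only [hBN, if_neg (Nat.succ_ne_zero N'), Nat.add_sub_cancel]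
      have h1 : N' ≤ n N' := hnmono.le_apply
      have h2 := hnm N'
      omega
  have hBtop : Tendsto BN atTop atTop := tendsto_atTop_mono hidle tendsto_id
  have htend : Tendsto (fun N => ∑ i ∈ Finset.range N, w i) atTop (𝓝 x) := by
    refine ((hexp x).comp hBtop).congr fun N => ?_
    rw [Function.comp_apply, ← hcut]
  refine ⟨w, ⟨hwmem, htend⟩, ?_⟩
  rintro y ⟨hymem, hyt⟩
  funext i0
  have hylzero : ∀ i l, l ∉ Set.Icc (n i) (m i) → g l (y i) = 0 :=
    fun i l hl => LinearMap.mem_ker.mp (hWker l i hl (hymem i))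
  have hcoef : ∀ l ∈ Finset.Icc (n i0) (m i0), g l (y i0) = g l x := by
    intro l hl
    rw [Finset.mem_Icc] at hl
    have hl' : l ∈ Set.Icc (n i0) (m i0) := Set.mem_Icc.mpr hl
    have hconst : ∀ N, i0 < N → g l (∑ i ∈ Finset.range N, y i) = g l (y i0) := by
      intro N hN
      rw [map_sum]
      apply Finset.sum_eq_single_of_mem i0 (Finset.mem_range.mpr hN)
      intro i _ hne
      apply hylzero
      intro hcon
      exact hne (hdisj i i0 l hcon hl')
    have ht1 : Tendsto (fun N => g l (∑ i ∈ Finset.range N, y i)) atTop (𝓝 (g l x)) :=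
      ((g l).continuous.tendsto x).comp hyt
    have ht2 : Tendsto (fun N => g l (∑ i ∈ Finset.range N, y i)) atTop (𝓝 (g l (y i0))) := by
      apply tendsto_const_nhds.congr'
      filter_upwards [eventually_gt_atTop i0] with N hN
      exact (hconst N hN).symm
    exact tendsto_nhds_unique ht2 ht1
  have hrepr := span_repr hdual (Finset.Icc (n i0) (m i0)) (hWle i0 (hymem i0))
  rw [hrepr]
  simp only [hw]
  apply Finset.sum_congr rfl
  intro j hj
  rw [hcoef j hj]


lemma span_image_eq_biSup (ε : ℕ → E) (s : Set ℕ) :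
    span ℝ (ε '' s) = ⨆ j ∈ s, span ℝ {ε j} := by
  apply le_antisymm
  · rw [Submodule.span_le]
    rintro - ⟨j, hj, rfl⟩
    rw [SetLike.mem_coe]
    exact le_iSup₂ (f := fun j _ => span ℝ {ε j}) j hj (mem_span_singleton_self _)
  · apply iSup₂_le
    intro j hj
    apply span_mono
    rw [Set.singleton_subset_iff]
    exact ⟨j, hj, rfl⟩

set_option maxHeartbeats 2000000 in
theorem part_fwd [CompleteSpace E] (e : ℕ → E) (hbasis : IsSchauderBasis e) (π : Equiv.Perm ℕ)
    (hsbd : ∀ n m : ℕ → ℕ, (∀ i, n i ≤ m i) → (∀ i, m i + 1 < n (i + 1)) →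
      IsFDDof (fun i => ⨆ j ∈ Set.Icc (n i) (m i), span ℝ {e (π j)})) :
    IsSchauderBasis (fun j => e (π j)) := by
  classical
  obtain ⟨f, Cb, hCb, hdualf, hexpf, hbdf⟩ := basis_pack hbasis
  set ε : ℕ → E := fun j => e (π j) with hε
  set g : ℕ → E →L[ℝ] ℝ := fun j => f (π j) with hg
  have hdual : ∀ k l, g k (ε l) = if k = l then 1 else 0 := by
    intro k l
    rw [hg, hε, hdualf]
    by_cases h : k = l
    · simp [h]
    · rw [if_neg h, if_neg (fun hc => h (π.injective hc))]
  have hbdg : ∀ k (x : E), ‖g k x • ε k‖ ≤ Cb * ‖x‖ := fun k x => hbdf (π k) x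
  set QL : ℕ → E →L[ℝ] E := fun N => ∑ j ∈ Finset.range N, (g j).smulRight (ε j) with hQL
  have hQapp : ∀ N x, QL N x = ∑ j ∈ Finset.range N, g j x • ε j := by
    intro N x
    rw [hQL]
    simp [ContinuousLinearMap.sum_apply]
  have hQe : ∀ N l, QL N (ε l) = if l < N then ε l else 0 := by
    intro N l
    rw [hQapp]
    have : ∀ j ∈ Finset.range N, g j (ε l) • ε j = if j = l then ε j else 0 := by
      intro j _
      rw [hdual]
      by_cases h : j = l <;> simp [h]
    rw [Finset.sum_congr rfl this, Finset.sum_ite_eq' (Finset.range N) l (fun j => ε j)]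
    by_cases h : l < N <;> simp [h]
  have hkerg : ∀ (s : Set ℕ) (l : ℕ), l ∉ s → ∀ y ∈ span ℝ (ε '' s), g l y = 0 := by
    intro s l hl y hy
    have : span ℝ (ε '' s) ≤ LinearMap.ker (g l : E →ₗ[ℝ] ℝ) := by
      rw [Submodule.span_le]
      rintro - ⟨j, hj, rfl⟩
      rw [SetLike.mem_coe, LinearMap.mem_ker, ContinuousLinearMap.coe_coe, hdual, if_neg]
      rintro rfl; exact hl hj
    exact LinearMap.mem_ker.mp (this hy)
  have hdense : ∀ x : E, x ∈ closure ((span ℝ (Set.range ε) : Submodule ℝ E) : Set E) := by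
    intro x
    refine mem_closure_of_tendsto (hexpf x) (Eventually.of_forall fun N => ?_)
    rw [SetLike.mem_coe]
    apply sum_mem
    intro i _
    have : e i = ε (π.symm i) := by rw [hε]; simp
    rw [this]
    exact smul_mem _ _ (subset_span ⟨π.symm i, rfl⟩)
  have hspan_ltM : ∀ y ∈ span ℝ (Set.range ε), ∃ M, y ∈ span ℝ (ε '' Set.Iio M) := by
    intro y hy
    induction hy using Submodule.span_induction with
    | mem z hz =>
      obtain ⟨l, rfl⟩ := hz
      exact ⟨l + 1, subset_span ⟨l, by simp, rfl⟩⟩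
    | zero => exact ⟨0, zero_mem _⟩
    | add u v hu hv ihu ihv =>
      obtain ⟨M1, h1⟩ := ihu
      obtain ⟨M2, h2⟩ := ihv
      refine ⟨max M1 M2, add_mem (span_mono (Set.image_mono ?_) h1)
        (span_mono (Set.image_mono ?_) h2)⟩
      · intro j hj; rw [Set.mem_Iio] at *; exact lt_of_lt_of_le hj (le_max_left _ _)
      · intro j hj; rw [Set.mem_Iio] at *; exact lt_of_lt_of_le hj (le_max_right _ _)
    | smul c u hu ihu =>
      obtain ⟨M1, h1⟩ := ihu
      exact ⟨M1, smul_mem _ _ h1⟩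
  have hQfix : ∀ (M : ℕ) (y : E), y ∈ span ℝ (ε '' Set.Iio M) → ∀ N, M ≤ N → QL N y = y := by
    intro M y hy N hMN
    have hyT : y ∈ span ℝ (ε '' ↑(Finset.range M)) := by rwa [Finset.coe_range]
    have hrepr := span_repr hdual (Finset.range M) hyT
    rw [hQapp]
    rw [← Finset.sum_subset (Finset.range_subset_range.mpr hMN) (fun j _ hj => ?_), ← hrepr]
    have hjM : M ≤ j := by
      rw [Finset.mem_range] at hj; omega
    rw [hkerg (Set.Iio M) j (by simp; omega) y hy, zero_smul]
  -- the uniform bound on the projections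
  have hK : ∃ K : ℝ, ∀ N, ‖QL N‖ ≤ K := by
    by_contra hnb
    push_neg at hnb
    have hstep : ∀ (c : ℝ) (b : ℕ) (s : Finset ℕ), ∃ (Nk Mk : ℕ) (yk : E),
        b ≤ Nk ∧ Nk + 1 < Mk ∧ ‖yk‖ ≤ 1 ∧
        yk ∈ span ℝ (ε '' Set.Iio Mk) ∧
        (∀ l ∈ insert Nk s, g l yk = 0) ∧
        c ≤ ‖QL Nk yk‖ := by
      intro c b s
      set κ : ℝ := (s.card : ℝ) + 1 with hκ
      have hκpos : 0 < κ := by positivity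
      set D : ℝ := 1 + Cb * κ with hD
      have hDpos : 0 < D := by positivity
      set c' : ℝ := max c 0 with hc'def
      have hc'0 : 0 ≤ c' := le_max_right _ _
      set β : ℝ := c' * D + Cb * κ with hβ
      have hβ0 : 0 ≤ β :=
        add_nonneg (mul_nonneg hc'0 hDpos.le) (mul_nonneg hCb.le hκpos.le)
      have hsum0 : 0 ≤ ∑ N' ∈ Finset.range b, ‖QL N'‖ :=
        Finset.sum_nonneg fun _ _ => norm_nonneg _
      obtain ⟨N, hN⟩ := hnb (β + ∑ N' ∈ Finset.range b, ‖QL N'‖)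
      have hNb : b ≤ N := by
        by_contra hcon
        push_neg at hcon
        have h1 : ‖QL N‖ ≤ ∑ N' ∈ Finset.range b, ‖QL N'‖ :=
          Finset.single_le_sum (f := fun N' => ‖QL N'‖) (fun _ _ => norm_nonneg _)
            (Finset.mem_range.mpr hcon)
        linarith
      have hβN : β < ‖QL N‖ := by linarith
      -- attainment on the dense span
      have hatt : ∃ z ∈ span ℝ (Set.range ε), ‖z‖ ≤ 1 ∧ β < ‖QL N z‖ := by
        by_contra hcon
        push_neg at hcon
        have hbb : ∀ z ∈ span ℝ (Set.range ε), ‖QL N z‖ ≤ β * ‖z‖ := by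
          intro z hz
          rcases eq_or_ne z 0 with rfl | hz0
          · simp
          · have hzn : 0 < ‖z‖ := norm_pos_iff.mpr hz0
            have h1 : ‖(‖z‖⁻¹ • z)‖ ≤ 1 := by
              rw [norm_smul, Real.norm_eq_abs, abs_of_pos (inv_pos.mpr hzn), inv_mul_cancel₀ hzn.ne']
            have h2 := hcon (‖z‖⁻¹ • z) (smul_mem _ _ hz) h1
            rw [map_smul, norm_smul, Real.norm_eq_abs, abs_of_pos (inv_pos.mpr hzn)] at h2
            calc ‖QL N z‖ = ‖z‖ * (‖z‖⁻¹ * ‖QL N z‖) := by field_simp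
              _ ≤ ‖z‖ * β := mul_le_mul_of_nonneg_left h2 hzn.le
              _ = β * ‖z‖ := mul_comm _ _
        have hall : ∀ z : E, ‖QL N z‖ ≤ β * ‖z‖ := by
          intro z
          have hclosed : IsClosed {z : E | ‖QL N z‖ ≤ β * ‖z‖} :=
            isClosed_le ((QL N).continuous.norm) (continuous_const.mul continuous_norm)
          exact closure_minimal hbb hclosed (hdense z)
        have := (QL N).opNorm_le_bound hβ0 hall
        linarith
      obtain ⟨z, hzspan, hz1, hzβ⟩ := hatt
      obtain ⟨M₁, hzM⟩ := hspan_ltM z hzspan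
      set t : Finset ℕ := insert N s with ht
      have htcard : (t.card : ℝ) ≤ κ := by
        rw [hκ]
        have := Finset.card_insert_le N s
        exact_mod_cast this
      have htcard0 : (0:ℝ) ≤ (t.card : ℝ) := Nat.cast_nonneg _
      set Mk : ℕ := max (max M₁ (N + 2)) ((t.sup id) + 1) with hMk
      set y' : E := z - ∑ l ∈ t, g l z • ε l with hy'
      have hy'span : y' ∈ span ℝ (ε '' Set.Iio Mk) := by
        apply sub_mem
        · refine span_mono (Set.image_mono fun j hj => ?_) hzM
          rw [Set.mem_Iio] at *
          have : M₁ ≤ Mk := le_trans (le_max_left _ _) (le_max_left _ _)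
          omega
        · apply sum_mem
          intro l hl
          apply smul_mem
          apply subset_span
          refine ⟨l, ?_, rfl⟩
          rw [Set.mem_Iio]
          have h1 : l ≤ t.sup id := Finset.le_sup (f := id) hl
          have h2 : t.sup id + 1 ≤ Mk := le_max_right _ _
          omega
      have hy'zero : ∀ l ∈ t, g l y' = 0 := by
        intro l hl
        rw [hy', map_sub, map_sum]
        have hterm : ∀ l' ∈ t, g l (g l' z • ε l') = if l' = l then g l' z else 0 := by
          intro l' _
          rw [map_smul, smul_eq_mul, hdual]
          by_cases h : l = l'
          · subst h; simp
          · rw [if_neg h, if_neg (fun hh => h hh.symm), mul_zero]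
        rw [Finset.sum_congr rfl hterm, Finset.sum_ite_eq' t l (fun l' => g l' z), if_pos hl,
          sub_self]
      have hy'norm : ‖y'‖ ≤ D := by
        rw [hy']
        calc ‖z - ∑ l ∈ t, g l z • ε l‖ ≤ ‖z‖ + ‖∑ l ∈ t, g l z • ε l‖ := norm_sub_le _ _
          _ ≤ 1 + ∑ l ∈ t, ‖g l z • ε l‖ := add_le_add hz1 (norm_sum_le _ _)
          _ ≤ 1 + ∑ _l ∈ t, Cb := by
              gcongr with l hl
              calc ‖g l z • ε l‖ ≤ Cb * ‖z‖ := hbdg l z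
                _ ≤ Cb * 1 := mul_le_mul_of_nonneg_left hz1 hCb.le
                _ = Cb := mul_one _
          _ = 1 + (t.card : ℝ) * Cb := by rw [Finset.sum_const, nsmul_eq_mul]
          _ ≤ 1 + Cb * κ := by
              have := mul_le_mul_of_nonneg_left htcard hCb.le
              linarith [this]
      have hQy' : β - Cb * κ ≤ ‖QL N y'‖ := by
        have h1 : QL N y' = QL N z - ∑ l ∈ t, g l z • QL N (ε l) := by
          rw [hy', map_sub, map_sum]
          congr 1
          exact Finset.sum_congr rfl fun l _ => map_smul _ _ _
        have h2 : ‖∑ l ∈ t, g l z • QL N (ε l)‖ ≤ Cb * κ := by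
          calc ‖∑ l ∈ t, g l z • QL N (ε l)‖ ≤ ∑ l ∈ t, ‖g l z • QL N (ε l)‖ := norm_sum_le _ _
            _ ≤ ∑ _l ∈ t, Cb := by
                apply Finset.sum_le_sum
                intro l hl
                rw [hQe]
                by_cases h : l < N
                · rw [if_pos h]
                  calc ‖g l z • ε l‖ ≤ Cb * ‖z‖ := hbdg l z
                    _ ≤ Cb * 1 := mul_le_mul_of_nonneg_left hz1 hCb.le
                    _ = Cb := mul_one _
                · rw [if_neg h, smul_zero, norm_zero]
                  exact hCb.le
            _ = (t.card : ℝ) * Cb := by rw [Finset.sum_const, nsmul_eq_mul]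
            _ ≤ Cb * κ := by
                have := mul_le_mul_of_nonneg_left htcard hCb.le
                linarith [this]
        calc β - Cb * κ ≤ ‖QL N z‖ - ‖∑ l ∈ t, g l z • QL N (ε l)‖ := by linarith
          _ ≤ ‖QL N z - ∑ l ∈ t, g l z • QL N (ε l)‖ := norm_sub_norm_le _ _
          _ = ‖QL N y'‖ := by rw [← h1]
      refine ⟨N, Mk, D⁻¹ • y', hNb, ?_, ?_, ?_, ?_, ?_⟩
      · have : N + 2 ≤ Mk := le_trans (le_max_right _ _) (le_max_left _ _)
        omega
      · rw [norm_smul, Real.norm_eq_abs, abs_of_pos (inv_pos.mpr hDpos), ← div_eq_inv_mul]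
        exact div_le_one_of_le₀ hy'norm hDpos.le
      · exact smul_mem _ _ hy'span
      · intro l hl
        rw [map_smul, hy'zero l hl, smul_zero]
      · rw [map_smul, norm_smul, Real.norm_eq_abs, abs_of_pos (inv_pos.mpr hDpos)]
        have hQc : c' * D ≤ ‖QL N y'‖ := by
          rw [hβ] at hQy'
          linarith
        calc c ≤ c' := le_max_left _ _
          _ = D⁻¹ * (c' * D) := by rw [mul_comm c' D, ← mul_assoc, inv_mul_cancel₀ hDpos.ne', one_mul]
          _ ≤ D⁻¹ * ‖QL N y'‖ := mul_le_mul_of_nonneg_left hQc (inv_pos.mpr hDpos).le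
    choose Nk Mk yk hs1 hs2 hs3 hs4 hs5 hs6 using hstep
    set st : ℕ → ℕ × Finset ℕ := fun k => Nat.rec (motive := fun _ => ℕ × Finset ℕ) (1, ∅)
      (fun k' ih => (max (Nk (k' : ℝ) ih.1 ih.2 + 2) (Mk (k' : ℝ) ih.1 ih.2),
        insert (Nk (k' : ℝ) ih.1 ih.2) ih.2)) k with hst
    set Nf : ℕ → ℕ := fun k => Nk (k : ℝ) (st k).1 (st k).2 with hNf
    set Mf : ℕ → ℕ := fun k => Mk (k : ℝ) (st k).1 (st k).2 with hMf
    set yf : ℕ → E := fun k => yk (k : ℝ) (st k).1 (st k).2 with hyf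
    have hstsucc : ∀ k, st (k+1) = (max (Nf k + 2) (Mf k), insert (Nf k) (st k).2) :=
      fun k => rfl
    have hb1 : ∀ k, (st k).1 ≤ Nf k := fun k => hs1 k _ _
    have hb2 : ∀ k, Nf k + 1 < Mf k := fun k => hs2 k _ _
    have hb3 : ∀ k, ‖yf k‖ ≤ 1 := fun k => hs3 k _ _
    have hb4 : ∀ k, yf k ∈ span ℝ (ε '' Set.Iio (Mf k)) := fun k => hs4 k _ _
    have hb5 : ∀ k, ∀ l ∈ insert (Nf k) (st k).2, g l (yf k) = 0 := fun k => hs5 k _ _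
    have hb6 : ∀ k : ℕ, (k:ℝ) ≤ ‖QL (Nf k) (yf k)‖ := fun k => hs6 (k : ℝ) _ _
    have hstmono : ∀ k, (st k).1 + 2 ≤ (st (k+1)).1 := by
      intro k
      rw [hstsucc]
      have h1 := hb1 k
      have h2 : Nf k + 2 ≤ max (Nf k + 2) (Mf k) := le_max_left _ _
      omega
    have hstle : ∀ j k, j ≤ k → (st j).1 ≤ (st k).1 := by
      intro j k hjk
      induction k with
      | zero =>
        have hj0 : j = 0 := Nat.le_zero.mp hjk
        subst hj0
        rfl
      | succ k ih =>
        rcases Nat.lt_succ_iff_lt_or_eq.mp (Nat.lt_succ_of_le hjk) with h | h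
        · have := hstmono k
          have := ih (by omega)
          omega
        · subst h; rfl
    have hNlt : ∀ j k, j < k → Nf j + 2 ≤ Nf k := by
      intro j k hjk
      have h1 : Nf j + 2 ≤ (st (j+1)).1 := by rw [hstsucc]; exact le_max_left _ _
      have h2 : (st (j+1)).1 ≤ (st k).1 := hstle _ _ hjk
      have h3 := hb1 k
      omega
    have hMle : ∀ j k, j < k → Mf j ≤ Nf k := by
      intro j k hjk
      have h1 : Mf j ≤ (st (j+1)).1 := by rw [hstsucc]; exact le_max_right _ _
      have h2 : (st (j+1)).1 ≤ (st k).1 := hstle _ _ hjk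
      have h3 := hb1 k
      omega
    have hN1 : ∀ k, 1 ≤ Nf k := by
      intro k
      have h1 : (st 0).1 ≤ (st k).1 := hstle 0 k (Nat.zero_le _)
      have h2 : (st 0).1 = 1 := rfl
      have h3 := hb1 k
      omega
    have hskipmem : ∀ j k, j < k → Nf j ∈ (st k).2 := by
      intro j k hjk
      induction k with
      | zero => omega
      | succ k ih =>
        rw [hstsucc]
        rcases Nat.lt_succ_iff_lt_or_eq.mp hjk with h | h
        · exact Finset.mem_insert_of_mem (ih h)
        · subst h; exact Finset.mem_insert_self _ _
    have hgNzero : ∀ j k, j ≤ k → g (Nf j) (yf k) = 0 := by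
      intro j k hjk
      rcases eq_or_lt_of_le hjk with rfl | h
      · exact hb5 j _ (Finset.mem_insert_self _ _)
      · exact hb5 k _ (Finset.mem_insert_of_mem (hskipmem j k h))
    have hgMzero : ∀ k l, Mf k ≤ l → g l (yf k) = 0 := fun k l hl =>
      hkerg (Set.Iio (Mf k)) l (by rw [Set.mem_Iio]; omega) _ (hb4 k)
    -- the skipped block sequence
    set n' : ℕ → ℕ := fun i => if i = 0 then 0 else Nf (i-1) + 1 with hn'
    set m' : ℕ → ℕ := fun i => Nf i - 1 with hm'
    have hnm' : ∀ i, n' i ≤ m' i := by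
      intro i
      match i with
      | 0 => simp [hn', hm']
      | (i+1) =>
        simp only [hn', hm', if_neg (Nat.succ_ne_zero i), Nat.add_sub_cancel]
        have := hNlt i (i+1) (Nat.lt_succ_self _)
        omega
    have hskip' : ∀ i, m' i + 1 < n' (i+1) := by
      intro i
      simp only [hn', hm', if_neg (Nat.succ_ne_zero i), Nat.add_sub_cancel]
      have := hN1 i
      omega
    have hfdd := hsbd n' m' hnm' hskip'
    have hWc : ∀ i, IsClosed ((⨆ j ∈ Set.Icc (n' i) (m' i), span ℝ {e (π j)} : Submodule ℝ E) :
        Set E) := by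
      intro i
      haveI := FiniteDimensional.span_of_finite ℝ
        (Set.Finite.image ε (Set.finite_Icc (n' i) (m' i)))
      have h1 := Submodule.closed_of_finiteDimensional
        (span ℝ (ε '' Set.Icc (n' i) (m' i)))
      rw [span_image_eq_biSup ε (Set.Icc (n' i) (m' i))] at h1
      exact h1
    obtain ⟨C, hCpos, hCkey⟩ := fdd_const _ hWc hfdd
    obtain ⟨k, hk⟩ := exists_nat_gt C
    set w : ℕ → E := fun i => ∑ j ∈ Finset.Icc (n' i) (m' i), g j (yf k) • ε j with hw
    have hwmem : ∀ i, w i ∈ (⨆ j ∈ Set.Icc (n' i) (m' i), span ℝ {e (π j)}) := by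
      intro i
      apply sum_mem
      intro j hj
      rw [Finset.mem_Icc] at hj
      exact le_iSup₂ (f := fun j _ => span ℝ {e (π j)}) j (Set.mem_Icc.mpr hj)
        (smul_mem _ _ (mem_span_singleton_self _))
    have hcut2 : ∀ I, I ≤ k + 2 → ∑ i ∈ Finset.range I, w i
        = ∑ j ∈ Finset.range (if I = 0 then 0 else Nf (I-1)), g j (yf k) • ε j := by
      intro I hI
      induction I with
      | zero => simp
      | succ I ih =>
        rw [Finset.sum_range_succ, ih (by omega)]
        simp only [if_neg (Nat.succ_ne_zero I), Nat.add_sub_cancel]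
        rcases Nat.eq_zero_or_pos I with rfl | hpos
        · have h0 : n' 0 = 0 := by simp [hn']
          have hIccR : Finset.Icc (n' 0) (m' 0) = Finset.range (Nf 0) := by
            rw [h0, Finset.range_eq_Ico, ← Finset.Ico_add_one_right_eq_Icc]
            have := hN1 0
            simp only [hm']
            congr 1
            omega
          simp only [hw, hIccR]
          simp
        · simp only [if_neg (Nat.pos_iff_ne_zero.mp hpos)]
          simp only [hw]
          have he1 : n' I = Nf (I-1) + 1 := by
            simp only [hn', if_neg (Nat.pos_iff_ne_zero.mp hpos)]
          have he2 : m' I = Nf I - 1 := rfl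
          rw [he1, he2]
          have hNlt2 : Nf (I-1) + 2 ≤ Nf I := hNlt (I-1) I (by omega)
          have he3 : Finset.Icc (Nf (I-1) + 1) (Nf I - 1)
              = Finset.Ico (Nf (I-1) + 1) (Nf I) := by
            rw [← Finset.Ico_add_one_right_eq_Icc]
            congr 1
            omega
          rw [he3]
          have hsplit : ∑ j ∈ Finset.range (Nf I), g j (yf k) • ε j
              = ∑ j ∈ Finset.range (Nf (I-1)), g j (yf k) • ε j
                + ∑ j ∈ Finset.Ico (Nf (I-1)) (Nf I), g j (yf k) • ε j := by
            simp only [Finset.range_eq_Ico]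
            rw [Finset.sum_Ico_consecutive _ (Nat.zero_le _) (by omega)]
          rw [hsplit]
          congr 1
          conv_rhs => rw [Finset.sum_eq_sum_Ico_succ_bot (by omega : Nf (I-1) < Nf I)]
          rw [hgNzero (I-1) k (by omega), zero_smul, zero_add]
    have ha : ∑ i ∈ Finset.range (k+1), w i = QL (Nf k) (yf k) := by
      rw [hcut2 (k+1) (by omega)]
      simp only [if_neg (Nat.succ_ne_zero k), Nat.add_sub_cancel]
      rw [hQapp]
    have hbb2 : ∑ i ∈ Finset.range (k+2), w i = yf k := by
      rw [hcut2 (k+2) (by omega)]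
      have he : (k + 2) - 1 = k + 1 := by omega
      simp only [if_neg (by omega : ¬(k + 2 = 0)), he]
      have hMN : Mf k ≤ Nf (k+1) := hMle k (k+1) (Nat.lt_succ_self _)
      rw [← Finset.sum_subset (Finset.range_subset_range.mpr hMN) (fun j _ hj => by
        rw [hgMzero k j (by rw [Finset.mem_range] at hj; omega), zero_smul])]
      have hyT : yf k ∈ span ℝ (ε '' ↑(Finset.range (Mf k))) := by
        rw [Finset.coe_range]; exact hb4 k
      exact (span_repr hdual (Finset.range (Mf k)) hyT).symm
    have hfinal := hCkey w hwmem (k+1) (k+2) (by omega)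
    rw [ha, hbb2] at hfinal
    have h6 := hb6 k
    have h3 := hb3 k
    have hcon : (k:ℝ) ≤ C := by
      calc (k:ℝ) ≤ ‖QL (Nf k) (yf k)‖ := h6
        _ ≤ C * ‖yf k‖ := hfinal
        _ ≤ C * 1 := mul_le_mul_of_nonneg_left h3 hCpos.le
        _ = C := mul_one _
    linarith
  obtain ⟨K, hKb⟩ := hK
  have hKpos : 0 ≤ K := le_trans (norm_nonneg _) (hKb 0)
  -- convergence of QL N x for every x
  have hconv : ∀ x : E, Tendsto (fun N => QL N x) atTop (𝓝 x) := by
    intro x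
    rw [Metric.tendsto_atTop]
    intro δ hδ
    have hδ' : 0 < δ / (2 * (K + 1)) := by positivity
    obtain ⟨y, hy, hyx⟩ := Metric.mem_closure_iff.mp (hdense x) _ hδ'
    rw [SetLike.mem_coe] at hy
    obtain ⟨M, hyM⟩ := hspan_ltM y hy
    refine ⟨M, fun N hN => ?_⟩
    have h1 : QL N y = y := hQfix M y hyM N hN
    have h2 : ‖QL N x - x‖ ≤ ‖QL N (x - y)‖ + ‖y - x‖ := by
      have : QL N x - x = QL N (x - y) + (y - x) := by
        rw [map_sub, h1]; abel
      rw [this]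
      exact norm_add_le _ _
    have h3 : ‖QL N (x - y)‖ ≤ K * ‖x - y‖ := le_trans ((QL N).le_opNorm _)
      (mul_le_mul_of_nonneg_right (hKb N) (norm_nonneg _))
    have h4 : ‖x - y‖ < δ / (2 * (K + 1)) := by
      rw [← dist_eq_norm]; exact hyx
    rw [dist_eq_norm]
    have h5 : ‖y - x‖ < δ / (2 * (K + 1)) := by
      rw [norm_sub_rev, ← dist_eq_norm]; exact hyx
    have hK1 : K ≤ K + 1 := by linarith
    calc ‖QL N x - x‖ ≤ ‖QL N (x - y)‖ + ‖y - x‖ := h2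
      _ ≤ K * ‖x - y‖ + ‖y - x‖ := by linarith
      _ < K * (δ / (2 * (K + 1))) + δ / (2 * (K + 1)) :=
          add_lt_add_of_le_of_lt (mul_le_mul_of_nonneg_left h4.le hKpos) h5
      _ = (K + 1) * (δ / (2 * (K + 1))) := by ring
      _ = δ / 2 := by
          have hKne : K + 1 ≠ 0 := by linarith
          field_simp
      _ ≤ δ := by linarith
  intro x
  refine ⟨fun i => g i x, ?_, ?_⟩
  · exact (hconv x).congr fun N => (hQapp N x)
  · rintro b hbt
    funext l
    have hterm : ∀ (N : ℕ), ∀ i ∈ Finset.range N, g l (b i • ε i) = if i = l then b i else 0 := by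
      intro N i _
      rw [map_smul, smul_eq_mul, hdual]
      by_cases h : l = i
      · subst h; simp
      · rw [if_neg h, if_neg (fun hh => h hh.symm), mul_zero]
    have hconst : ∀ N, l < N → g l (∑ i ∈ Finset.range N, b i • ε i) = b l := by
      intro N hN
      rw [map_sum, Finset.sum_congr rfl (hterm N),
        Finset.sum_ite_eq' (Finset.range N) l (fun i => b i), if_pos (Finset.mem_range.mpr hN)]
    have ht1 : Tendsto (fun N => g l (∑ i ∈ Finset.range N, b i • ε i)) atTop (𝓝 (g l x)) :=
      ((g l).continuous.tendsto x).comp hbt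
    have ht2 : Tendsto (fun N => g l (∑ i ∈ Finset.range N, b i • ε i)) atTop (𝓝 (b l)) := by
      apply tendsto_const_nhds.congr'
      filter_upwards [eventually_gt_atTop l] with N hN
      exact (hconst N hN).symm
    exact tendsto_nhds_unique ht2 ht1


theorem stmt4 [CompleteSpace E] (e : ℕ → E) (hbasis : IsSchauderBasis e)
    (π : Equiv.Perm ℕ) :
    IsDDD (fun n => Submodule.span ℝ {e (π n)}) ∧
    (IsSBD (fun n => Submodule.span ℝ {e (π n)}) ↔ IsSchauderBasis (fun n => e (π n))) := by
  refine ⟨part1 e hbasis π, ?_, ?_⟩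
  · rintro ⟨hddd, hblocks⟩
    exact part_fwd e hbasis π hblocks
  · intro hb'
    exact ⟨part1 e hbasis π, fun n m hnm hskip => part_bwd _ hb' n m hnm hskip⟩
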